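/- arXiv:2311.11093 — 2 statements merged into one kernel-verified Lean document; each statement's English description precedes it below -/
import Mathlib

section
/- For any square matrix M and any p ≥ 1, the Schatten p-norm of the diagonal part of M is at most the Schatten p-norm of M, i.e. ‖M_d‖_p ≤ ‖M‖_p, where M_d agrees with M on the diagonal and is zero off the diagonal. -/
open scoped BigOperators

/-- Singular values of a real square matrix: square roots of the eigenvalues
of `Mᵀ * M` (which is Hermitian). -/
noncomputable def singVals {n : ℕ} (M : Matrix (Fin n) (Fin n) ℝ) : Fin n → ℝ :=
  fun i => Real.sqrt ((Matrix.isHermitian_conjTranspose_mul_self M).eigenvalues i)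

/-- Schatten `p`-norm `‖M‖_p = (∑ i, σ_i(M)^p)^(1/p)`. -/
noncomputable def schattenNorm {n : ℕ} (p : ℝ) (M : Matrix (Fin n) (Fin n) ℝ) : ℝ :=
  (∑ i, (singVals M i) ^ p) ^ (1 / p)

section SchattenHelpers

open Polynomial Matrix

/-- Jensen-type inequality for substochastic weights: if the nonnegative weights `c` sum to
at most `1` and `t` is nonnegative, then `(∑ c k * t k) ^ p ≤ ∑ c k * t k ^ p` for `p ≥ 1`. -/
lemma jensen_substochastic {m : ℕ} {p : ℝ} (hp : 1 ≤ p) (c t : Fin m → ℝ)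
    (hc : ∀ k, 0 ≤ c k) (hcs : ∑ k, c k ≤ 1) (ht : ∀ k, 0 ≤ t k) :
    (∑ k, c k * t k) ^ p ≤ ∑ k, c k * t k ^ p := by
  have hp0 : p ≠ 0 := by positivity
  have h := Real.rpow_arith_mean_le_arith_mean_rpow (Finset.univ : Finset (Option (Fin m)))
    (fun o => o.elim (1 - ∑ k, c k) c) (fun o => o.elim 0 t)
    (fun o _ => by cases o with
      | none => simpa using hcs
      | some k => exact hc k)
    (by simp [Fintype.sum_option])
    (fun o _ => by cases o with
      | none => exact le_refl 0
      | some k => exact ht k) hp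
  simpa [Fintype.sum_option, Real.zero_rpow hp0] using h

/-- The characteristic polynomial is invariant under unitary conjugation. -/
lemma charpoly_unitary_conj {m : ℕ} (U D : Matrix (Fin m) (Fin m) ℝ)
    (hU : U * star U = 1) :
    (U * D * star U).charpoly = D.charpoly := by
  have hmapU : (U * star U).map (C : ℝ →+* ℝ[X]) = 1 := by
    rw [hU]; exact Matrix.map_one _ (map_zero C) (map_one C)
  have key : charmatrix (U * D * star U) = U.map C * charmatrix D * (star U).map C := by
    unfold charmatrix
    rw [Matrix.mul_sub, Matrix.sub_mul, RingHom.mapMatrix_apply, RingHom.mapMatrix_apply,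
      ← Matrix.map_mul, ← Matrix.map_mul]
    congr 1
    symm
    calc U.map C * Matrix.scalar (Fin m) (X : ℝ[X]) * (star U).map C
        = Matrix.scalar (Fin m) (X : ℝ[X]) * (U.map C * (star U).map C) := by
          rw [← (Matrix.scalar_commute (X : ℝ[X]) (fun r' => Commute.all _ _) (U.map C)).eq,
            Matrix.mul_assoc]
      _ = Matrix.scalar (Fin m) (X : ℝ[X]) := by rw [← Matrix.map_mul, hmapU, Matrix.mul_one]
  unfold Matrix.charpoly
  rw [key, det_mul, det_mul]
  have : det (U.map (C : ℝ →+* ℝ[X])) * det ((star U).map C) = 1 := by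
    rw [← det_mul, ← Matrix.map_mul, hmapU, det_one]
  calc det (U.map (C : ℝ →+* ℝ[X])) * det (charmatrix D) * det ((star U).map C)
      = det (U.map (C : ℝ →+* ℝ[X])) * det ((star U).map C) * det (charmatrix D) := by ring
    _ = det (charmatrix D) := by rw [this, one_mul]

/-- For a Hermitian matrix which happens to be diagonal, summing any function of the
eigenvalues is the same as summing that function of the diagonal entries. -/
lemma sum_comp_eigenvalues_diagonal {m : ℕ} (c : Fin m → ℝ)
    (A : Matrix (Fin m) (Fin m) ℝ) (hAc : A = Matrix.diagonal c)
    (hA : A.IsHermitian) (f : ℝ → ℝ) :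
    ∑ i, f (hA.eigenvalues i) = ∑ i, f (c i) := by
  have h1 : A.charpoly = ∏ i, (X - C (c i)) := by
    rw [hAc, charpoly_of_upperTriangular _ (blockTriangular_diagonal c)]
    simp
  have h2 : A.charpoly = ∏ i, (X - C (hA.eigenvalues i)) := by
    conv_lhs => rw [hA.spectral_theorem]
    rw [Unitary.conjStarAlgAut_apply, charpoly_unitary_conj _ _ (Matrix.mem_unitaryGroup_iff.mp (hA.eigenvectorUnitary).2),
      charpoly_of_upperTriangular _ (blockTriangular_diagonal _)]
    simp [RCLike.ofReal_real_eq_id]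
  have e : ∀ (g : Fin m → ℝ), (∏ i, (X - C (g i)))
      = ((Finset.univ.val.map g).map (fun a => X - C a)).prod := by
    intro g; rw [Multiset.map_map]; rfl
  have h3 : (Finset.univ.val.map c) = (Finset.univ.val.map hA.eigenvalues) := by
    have := congrArg Polynomial.roots (h1.symm.trans h2)
    rwa [e c, e hA.eigenvalues, roots_multiset_prod_X_sub_C,
      roots_multiset_prod_X_sub_C] at this
  have e2 : ∀ (g : Fin m → ℝ), ∑ i, f (g i) = ((Finset.univ.val.map g).map f).sum := by
    intro g; rw [Multiset.map_map]; rfl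
  rw [e2, e2, h3]

/-- A matrix whose columns are "orthonormal or zero" has rows of norm at most one. -/
lemma row_sq_sum_le_one {n : ℕ} (lam : Fin n → ℝ) (V : Fin n → Fin n → ℝ)
    (hVV : ∀ j k, ∑ i, V i j * V i k = if j = k ∧ lam k ≠ 0 then 1 else 0)
    (i : Fin n) : ∑ k, V i k ^ 2 ≤ 1 := by
  classical
  set s : ℝ := ∑ k, V i k ^ 2 with hs
  have hs0 : 0 ≤ s := Finset.sum_nonneg fun k _ => sq_nonneg _
  set w : Fin n → ℝ := fun j => ∑ k, V j k * V i k with hw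
  have hwi : w i = s := by simp [hw, hs, sq]
  have key : ∑ j, w j ^ 2 ≤ s := by
    have expand : ∑ j, w j ^ 2
        = ∑ k, ∑ l, (V i k * V i l) * ∑ j, V j k * V j l := by
      simp only [hw, sq, Finset.sum_mul_sum]
      rw [Finset.sum_comm]
      refine Finset.sum_congr rfl fun k _ => ?_
      rw [Finset.sum_comm]
      refine Finset.sum_congr rfl fun l _ => ?_
      rw [Finset.mul_sum]
      refine Finset.sum_congr rfl fun j _ => by ring
    rw [expand]
    have step : ∀ k, (∑ l, (V i k * V i l) * ∑ j, V j k * V j l)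
        = if lam k ≠ 0 then V i k ^ 2 else 0 := by
      intro k
      have : ∀ l, (V i k * V i l) * (∑ j, V j k * V j l)
          = if l = k then (V i k * V i l) * (if lam k ≠ 0 then 1 else 0) else 0 := by
        intro l
        rw [hVV k l]
        by_cases hlk : l = k
        · subst hlk; simp
        · have : ¬(k = l ∧ lam l ≠ 0) := fun h => hlk h.1.symm
          simp [this, hlk]
      simp only [this]
      rw [Finset.sum_ite_eq' Finset.univ k
        (fun l => (V i k * V i l) * (if lam k ≠ 0 then 1 else 0))]
      by_cases hk : lam k ≠ 0 <;> simp [hk, sq]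
    calc ∑ k, (∑ l, (V i k * V i l) * ∑ j, V j k * V j l)
        = ∑ k, if lam k ≠ 0 then V i k ^ 2 else 0 := Finset.sum_congr rfl fun k _ => step k
      _ ≤ ∑ k, V i k ^ 2 := Finset.sum_le_sum fun k _ => by
          split <;> [exact le_refl _; exact sq_nonneg _]
      _ = s := rfl
  have hles : s ^ 2 ≤ s := by
    calc s ^ 2 = w i ^ 2 := by rw [hwi]
      _ ≤ ∑ j, w j ^ 2 :=
        Finset.single_le_sum (fun j _ => sq_nonneg (w j)) (Finset.mem_univ i)
      _ ≤ s := key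
  nlinarith [hles, hs0]

/-- The core estimate: given the factorization data `M i i = ∑ k, B i k * U i k` with
`B = σ ⬝ V` and substochastic row/column structure, `∑ |M i i| ^ p ≤ ∑ σ k ^ p`. -/
lemma sum_abs_diag_rpow_le {n : ℕ} (p : ℝ) (hp : 1 ≤ p) (M U B V : Matrix (Fin n) (Fin n) ℝ)
    (lam : Fin n → ℝ)
    (hM : ∀ i, M i i = ∑ k, B i k * U i k)
    (hBV : ∀ i k, B i k = Real.sqrt (lam k) * V i k)
    (hUrow : ∀ i, ∑ k, U i k ^ 2 = 1) (hUcol : ∀ k, ∑ i, U i k ^ 2 = 1)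
    (hVrow : ∀ i, ∑ k, V i k ^ 2 ≤ 1) (hVcol : ∀ k, ∑ i, V i k ^ 2 ≤ 1) :
    ∑ i, |M i i| ^ p ≤ ∑ k, Real.sqrt (lam k) ^ p := by
  classical
  have hp0 : (0:ℝ) ≤ p := le_trans zero_le_one hp
  set a : Fin n → Fin n → ℝ := fun i k => |V i k| * |U i k| with ha
  have ha0 : ∀ i k, 0 ≤ a i k := fun i k => mul_nonneg (abs_nonneg _) (abs_nonneg _)
  have harow : ∀ i, ∑ k, a i k ≤ 1 := by
    intro i
    have hcs := Finset.sum_mul_sq_le_sq_mul_sq Finset.univ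
      (fun k => |V i k|) (fun k => |U i k|)
    simp only [sq_abs] at hcs
    have h1 : (∑ k, a i k) ^ 2 ≤ 1 := by
      refine le_trans hcs ?_
      rw [hUrow i]
      simpa using hVrow i
    have h2 : 0 ≤ ∑ k, a i k := Finset.sum_nonneg fun k _ => ha0 i k
    nlinarith
  have hacol : ∀ k, ∑ i, a i k ≤ 1 := by
    intro k
    have hcs := Finset.sum_mul_sq_le_sq_mul_sq Finset.univ
      (fun i => |V i k|) (fun i => |U i k|)
    simp only [sq_abs] at hcs
    have h1 : (∑ i, a i k) ^ 2 ≤ 1 := by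
      refine le_trans hcs ?_
      rw [hUcol k]
      simpa using hVcol k
    have h2 : 0 ≤ ∑ i, a i k := Finset.sum_nonneg fun i _ => ha0 i k
    nlinarith
  have hpt : ∀ i, |M i i| ^ p ≤ ∑ k, a i k * Real.sqrt (lam k) ^ p := by
    intro i
    have h1 : |M i i| ≤ ∑ k, a i k * Real.sqrt (lam k) := by
      rw [hM i]
      refine le_trans (Finset.abs_sum_le_sum_abs _ _) ?_
      refine Finset.sum_le_sum fun k _ => ?_
      rw [hBV i k, abs_mul, abs_mul, abs_of_nonneg (Real.sqrt_nonneg _)]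
      rw [ha]
      ring_nf
      exact le_refl _
    have h2 : |M i i| ^ p ≤ (∑ k, a i k * Real.sqrt (lam k)) ^ p :=
      Real.rpow_le_rpow (abs_nonneg _) h1 hp0
    refine le_trans h2 ?_
    exact jensen_substochastic hp (a i) (fun k => Real.sqrt (lam k))
      (ha0 i) (harow i) (fun k => Real.sqrt_nonneg _)
  calc ∑ i, |M i i| ^ p ≤ ∑ i, ∑ k, a i k * Real.sqrt (lam k) ^ p :=
        Finset.sum_le_sum fun i _ => hpt i
    _ = ∑ k, (∑ i, a i k) * Real.sqrt (lam k) ^ p := by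
        rw [Finset.sum_comm]
        exact Finset.sum_congr rfl fun k _ => (Finset.sum_mul _ _ _).symm
    _ ≤ ∑ k, Real.sqrt (lam k) ^ p := by
        refine Finset.sum_le_sum fun k _ => ?_
        have hx : (0:ℝ) ≤ Real.sqrt (lam k) ^ p := Real.rpow_nonneg (Real.sqrt_nonneg _) p
        nlinarith [hacol k, Finset.sum_nonneg (fun i (_ : i ∈ Finset.univ) => ha0 i k)]

end SchattenHelpers

/-- For any square matrix `M` and any `p ≥ 1`, the Schatten `p`-norm of the diagonal
part of `M` is at most the Schatten `p`-norm of `M`. -/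
theorem stmt_1 {n : ℕ} (M : Matrix (Fin n) (Fin n) ℝ) (p : ℝ) (hp : 1 ≤ p) :
    schattenNorm p (Matrix.diagonal (fun i => M i i)) ≤ schattenNorm p M := by
  classical
  have hp0 : (0:ℝ) ≤ p := le_trans zero_le_one hp
  -- LHS: the Schatten norm of the diagonal part is `(∑ |M i i| ^ p) ^ (1/p)`
  have hdiagH : (Matrix.conjTranspose (Matrix.diagonal (fun i => M i i)) * Matrix.diagonal (fun i => M i i))
      = Matrix.diagonal (fun i => (M i i) ^ 2) := by
    rw [Matrix.diagonal_conjTranspose, Matrix.diagonal_mul_diagonal]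
    simp [sq]
  have hLHS : ∑ i, (singVals (Matrix.diagonal (fun i => M i i)) i) ^ p
      = ∑ i, |M i i| ^ p := by
    have h := sum_comp_eigenvalues_diagonal (fun i => (M i i) ^ 2) _ hdiagH
      (Matrix.isHermitian_conjTranspose_mul_self (Matrix.diagonal (fun i => M i i)))
      (fun x => Real.sqrt x ^ p)
    simp only [singVals]
    rw [h]
    exact Finset.sum_congr rfl fun i _ => by rw [Real.sqrt_sq_eq_abs]
  -- RHS setup: spectral data of `Mᴴ * M`
  set hH := Matrix.isHermitian_conjTranspose_mul_self M with hHdef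
  set lam : Fin n → ℝ := hH.eigenvalues with hlamdef
  have hlam : ∀ k, 0 ≤ lam k := fun k =>
    Matrix.eigenvalues_conjTranspose_mul_self_nonneg M k
  set U : Matrix (Fin n) (Fin n) ℝ := (hH.eigenvectorUnitary : Matrix (Fin n) (Fin n) ℝ)
    with hUdef
  have hU1 : U * star U = 1 := Matrix.mem_unitaryGroup_iff.mp hH.eigenvectorUnitary.2
  have hU2 : star U * U = 1 := Matrix.mem_unitaryGroup_iff'.mp hH.eigenvectorUnitary.2
  have hdiag : star U * (Matrix.conjTranspose M * M) * U = Matrix.diagonal lam := by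
    have := hH.conjStarAlgAut_star_eigenvectorUnitary
    rw [Unitary.conjStarAlgAut_star_apply] at this
    simp [RCLike.ofReal_real_eq_id] at this
    exact this
  set B : Matrix (Fin n) (Fin n) ℝ := M * U with hBdef
  have hBtB : ∀ j k, ∑ i, B i j * B i k = Matrix.diagonal lam j k := by
    intro j k
    have h : Matrix.conjTranspose B * B = Matrix.diagonal lam := by
      rw [hBdef, Matrix.conjTranspose_mul, ← hdiag, Matrix.star_eq_conjTranspose]
      simp only [Matrix.mul_assoc]
    have := congrFun (congrFun h j) k
    rw [Matrix.mul_apply] at this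
    simp only [Matrix.conjTranspose_apply, star_trivial] at this
    exact this
  have hM : ∀ i, M i i = ∑ k, B i k * U i k := by
    intro i
    have h : B * star U = M := by
      rw [hBdef, Matrix.mul_assoc, hU1, Matrix.mul_one]
    have := congrFun (congrFun h i) i
    rw [Matrix.mul_apply] at this
    simp only [Matrix.star_apply, star_trivial] at this
    rw [← this]
  have hUrow : ∀ i, ∑ k, U i k ^ 2 = 1 := by
    intro i
    have := congrFun (congrFun hU1 i) i
    rw [Matrix.mul_apply] at this
    simp only [Matrix.star_apply, star_trivial, Matrix.one_apply_eq] at this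
    simpa [sq] using this
  have hUcol : ∀ k, ∑ i, U i k ^ 2 = 1 := by
    intro k
    have := congrFun (congrFun hU2 k) k
    rw [Matrix.mul_apply] at this
    simp only [Matrix.star_apply, star_trivial, Matrix.one_apply_eq] at this
    simpa [sq] using this
  -- the partial isometry `V`
  set V : Fin n → Fin n → ℝ :=
    fun i k => if lam k = 0 then 0 else B i k / Real.sqrt (lam k) with hVdef
  have hsqrt_pos : ∀ k, lam k ≠ 0 → 0 < Real.sqrt (lam k) := fun k h =>
    Real.sqrt_pos.mpr (lt_of_le_of_ne (hlam k) (Ne.symm h))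
  have hVV : ∀ j k, ∑ i, V i j * V i k = if j = k ∧ lam k ≠ 0 then 1 else 0 := by
    intro j k
    by_cases hj : lam j = 0
    · simp only [hVdef, hj, if_pos rfl, zero_mul, Finset.sum_const_zero]
      by_cases hjk : j = k
      · simp [← hjk, hj]
      · simp [hjk]
    · by_cases hk : lam k = 0
      · simp only [hVdef, hk, if_pos rfl, mul_zero, Finset.sum_const_zero]
        have : j ≠ k := fun h => hj (h ▸ hk)
        simp [this, hk]
      · simp only [hVdef, if_neg hj, if_neg hk, div_mul_div_comm]
        rw [← Finset.sum_div]
        rw [hBtB j k]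
        by_cases hjk : j = k
        · subst hjk
          rw [Matrix.diagonal_apply_eq]
          rw [Real.mul_self_sqrt (hlam j)]
          simp [div_self hj, hj]
        · rw [Matrix.diagonal_apply_ne _ hjk]
          simp [hjk]
  have hBV : ∀ i k, B i k = Real.sqrt (lam k) * V i k := by
    intro i k
    by_cases hk : lam k = 0
    · have hV0 : V i k = 0 := by simp [hVdef, hk]
      rw [hV0, mul_zero]
      have hsum : ∑ i, B i k * B i k = 0 := by rw [hBtB k k]; simp [hk]
      have := (Finset.sum_eq_zero_iff_of_nonneg
        (fun i _ => mul_self_nonneg (B i k))).mp hsum i (Finset.mem_univ i)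
      exact mul_self_eq_zero.mp this
    · rw [hVdef]
      simp only [if_neg hk]
      rw [mul_div_assoc']
      rw [mul_div_cancel_left₀ _ (ne_of_gt (hsqrt_pos k hk))]
  have hVcol : ∀ k, ∑ i, V i k ^ 2 ≤ 1 := by
    intro k
    have h := hVV k k
    calc ∑ i, V i k ^ 2 = ∑ i, V i k * V i k := by simp [sq]
      _ = if k = k ∧ lam k ≠ 0 then 1 else 0 := h
      _ ≤ if lam k ≠ 0 then 1 else 0 := by by_cases hk : lam k = 0 <;> simp [hk]
      _ ≤ 1 := by split <;> norm_num
  have hVrow : ∀ i, ∑ k, V i k ^ 2 ≤ 1 := row_sq_sum_le_one lam V hVV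
  -- main inequality between the sums
  have hmain : ∑ i, |M i i| ^ p ≤ ∑ k, Real.sqrt (lam k) ^ p :=
    sum_abs_diag_rpow_le p hp M U B V lam hM hBV hUrow hUcol hVrow hVcol
  -- conclude
  unfold schattenNorm
  rw [hLHS]
  refine Real.rpow_le_rpow ?_ ?_ (by positivity)
  · exact Finset.sum_nonneg fun i _ => Real.rpow_nonneg (abs_nonneg _) p
  · exact hmain
end

section
/- Let q be a minimizer of g(x) = (1/2)∑ᵢ xᵢ²/σᵢ² + ∑ᵢ xᵢ/σᵢ² + α⁻¹‖x‖_p over ℝ^d, where ‖·‖_p is the Euclidean p-norm with 1 ≤ p < ∞, σᵢ > 0, α > 0. Then every coordinate of q satisfies −1 ≤ qᵢ ≤ 0. -/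
open scoped BigOperators

/-- Auxiliary: replacing coordinate `i` of `q` by `c` with strictly smaller
quadratic contribution and `|c| ≤ |q i|` contradicts minimality. -/
lemma stmt_7_aux {d : ℕ} (σ : Fin d → ℝ) (hσ : ∀ i, 0 < σ i) (α p : ℝ)
    (hα : 0 < α) (hp : 1 ≤ p) (q : Fin d → ℝ)
    (hq : ∀ x : Fin d → ℝ,
      (1/2) * ∑ i, (q i)^2 / (σ i)^2 + ∑ i, q i / (σ i)^2
          + α⁻¹ * (∑ i, |q i| ^ p) ^ (1/p) ≤
        (1/2) * ∑ i, (x i)^2 / (σ i)^2 + ∑ i, x i / (σ i)^2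
          + α⁻¹ * (∑ i, |x i| ^ p) ^ (1/p))
    (i : Fin d) (c : ℝ)
    (hquad : (1/2) * c^2 / (σ i)^2 + c / (σ i)^2
        < (1/2) * (q i)^2 / (σ i)^2 + q i / (σ i)^2)
    (habs : |c| ≤ |q i|) : False := by
  set x : Fin d → ℝ := Function.update q i c with hx
  have hxi : x i = c := Function.update_self i c q
  have hxj : ∀ j ∈ Finset.univ.erase i, x j = q j := by
    intro j hj
    exact Function.update_of_ne (Finset.mem_erase.1 hj).1 c q
  have hmem : i ∈ (Finset.univ : Finset (Fin d)) := Finset.mem_univ i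
  -- decompose the three sums
  have h1 : ∑ j, (x j)^2 / (σ j)^2
      = c^2 / (σ i)^2 + ∑ j ∈ Finset.univ.erase i, (q j)^2 / (σ j)^2 := by
    rw [← Finset.add_sum_erase _ _ hmem, hxi]
    congr 1
    exact Finset.sum_congr rfl (fun j hj => by rw [hxj j hj])
  have h1' : ∑ j, (q j)^2 / (σ j)^2
      = (q i)^2 / (σ i)^2 + ∑ j ∈ Finset.univ.erase i, (q j)^2 / (σ j)^2 :=
    (Finset.add_sum_erase _ _ hmem).symm
  have h2 : ∑ j, x j / (σ j)^2
      = c / (σ i)^2 + ∑ j ∈ Finset.univ.erase i, q j / (σ j)^2 := by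
    rw [← Finset.add_sum_erase _ _ hmem, hxi]
    congr 1
    exact Finset.sum_congr rfl (fun j hj => by rw [hxj j hj])
  have h2' : ∑ j, q j / (σ j)^2
      = q i / (σ i)^2 + ∑ j ∈ Finset.univ.erase i, q j / (σ j)^2 :=
    (Finset.add_sum_erase _ _ hmem).symm
  -- the p-norm part is not larger
  have hp0 : (0:ℝ) < p := lt_of_lt_of_le one_pos hp
  have hpsum : ∑ j, |x j| ^ p ≤ ∑ j, |q j| ^ p := by
    apply Finset.sum_le_sum
    intro j _
    by_cases hji : j = i
    · subst hji
      rw [hxi]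
      exact Real.rpow_le_rpow (abs_nonneg _) habs (le_of_lt hp0)
    · rw [show x j = q j from Function.update_of_ne hji c q]
  have hnorm : (∑ j, |x j| ^ p) ^ (1/p) ≤ (∑ j, |q j| ^ p) ^ (1/p) := by
    apply Real.rpow_le_rpow _ hpsum (by positivity)
    exact Finset.sum_nonneg fun j _ => Real.rpow_nonneg (abs_nonneg _) p
  have hnorm' : α⁻¹ * (∑ j, |x j| ^ p) ^ (1/p) ≤ α⁻¹ * (∑ j, |q j| ^ p) ^ (1/p) :=
    mul_le_mul_of_nonneg_left hnorm (by positivity)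
  have := hq x
  rw [h1, h1', h2, h2'] at this
  rw [mul_div_assoc, mul_div_assoc] at hquad
  linarith [hnorm', hquad]

/-- Let `q` be a minimizer of
`g(x) = (1/2)∑ᵢ xᵢ²/σᵢ² + ∑ᵢ xᵢ/σᵢ² + α⁻¹ (∑ᵢ |xᵢ|^p)^(1/p)` over `ℝ^d`,
with `1 ≤ p < ∞`, `σᵢ > 0`, `α > 0`. Then every coordinate of `q` satisfies
`-1 ≤ qᵢ ≤ 0`. -/
theorem stmt_7 {d : ℕ} (σ : Fin d → ℝ) (hσ : ∀ i, 0 < σ i) (α p : ℝ)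
    (hα : 0 < α) (hp : 1 ≤ p) (q : Fin d → ℝ)
    (hq : ∀ x : Fin d → ℝ,
      (1/2) * ∑ i, (q i)^2 / (σ i)^2 + ∑ i, q i / (σ i)^2
          + α⁻¹ * (∑ i, |q i| ^ p) ^ (1/p) ≤
        (1/2) * ∑ i, (x i)^2 / (σ i)^2 + ∑ i, x i / (σ i)^2
          + α⁻¹ * (∑ i, |x i| ^ p) ^ (1/p)) :
    ∀ i, -1 ≤ q i ∧ q i ≤ 0 := by
  intro i
  have hσ2 : (0:ℝ) < (σ i)^2 := pow_pos (hσ i) 2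
  constructor
  · by_contra h
    push_neg at h
    refine stmt_7_aux σ hσ α p hα hp q hq i (-1) ?_ ?_
    · rw [← add_div, ← add_div, div_lt_div_iff₀ hσ2 hσ2]
      nlinarith [mul_pos (pow_pos (by linarith : (0:ℝ) < -(q i + 1)) 2) hσ2]
    · rw [abs_of_neg (by linarith : q i < 0)]
      simp only [abs_neg, abs_one]
      linarith
  · by_contra h
    push_neg at h
    refine stmt_7_aux σ hσ α p hα hp q hq i 0 ?_ ?_
    · rw [← add_div, ← add_div, div_lt_div_iff₀ hσ2 hσ2]
      nlinarith [mul_pos (mul_pos h h) hσ2, mul_pos h hσ2]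
    · rw [abs_of_pos h]
      simp [le_of_lt h]
end
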